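/- Let G be the simple graph on vertex set {0, 1, 2, 3, 4, 5, 6} whose edge set consists of the heptagon edges {{0,1}, {1,2}, {2,3}, {3,4}, {4,5}, {5,6}, {6,0}} together with the chords {{1,3}, {0,3}, {0,4}, {4,6}} (a triangulation of the heptagon, hence a maximal outerplanar graph of order 7). Then for every integer k ≥ 0, G is k-edge magic if and only if k ≡ 2 (mod 7). -/

import Mathlib

open scoped Classical in
/-- A finite simple graph `G` on a finite vertex type is `k`-edge magic if there is a
labeling of its edges that is a bijection onto `{k, k+1, ..., k+q-1}` (where `q` is the
number of edges) such that all the induced vertex sums (the sum of the labels of the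
edges incident to a vertex) are congruent modulo the number of vertices. -/
def IsKEdgeMagic {V : Type*} [Fintype V] (G : SimpleGraph V) (k : ℕ) : Prop :=
  ∃ f : Sym2 V → ℕ,
    Set.BijOn f G.edgeSet ((fun i => k + i) '' Set.Iio G.edgeFinset.card) ∧
    ∃ c : ZMod (Fintype.card V),
      ∀ v : V, ((∑ e ∈ G.incidenceFinset v, f e : ℕ) : ZMod (Fintype.card V)) = c

/-- A concrete simple graph on `Fin 7`. -/
def G7 : SimpleGraph (Fin 7) where
  Adj a b := a ≠ b ∧ s(a,b) ∈ ({s(0,1), s(1,2), s(2,3), s(3,4), s(4,5), s(5,6), s(6,0), s(1,3), s(0,3), s(0,4), s(4,6)} : Finset (Sym2 (Fin 7)))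
  symm := ⟨fun a b h => ⟨h.1.symm, by rw [show s(b,a) = s(a,b) from Sym2.eq_swap]; exact h.2⟩⟩
  loopless := ⟨fun a h => h.1 rfl⟩

def E7 : Finset (Sym2 (Fin 7)) := {s(0,1), s(1,2), s(2,3), s(3,4), s(4,5), s(5,6), s(6,0), s(1,3), s(0,3), s(0,4), s(4,6)}

def L7 : List (Sym2 (Fin 7) × ℕ) :=
  [(s(0,1),0),(s(1,2),1),(s(2,3),2),(s(3,4),5),(s(4,5),8),(s(5,6),9),(s(6,0),3),(s(1,3),7),(s(0,3),6),(s(0,4),4),(s(4,6),10)]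

def g7 (e : Sym2 (Fin 7)) : ℕ := ((L7.find? (fun p => decide (p.1 = e))).map Prod.snd).getD 0

lemma edgeSet_G7 : G7.edgeSet = ↑E7 := by
  ext e
  induction e using Sym2.ind with
  | _ a b =>
    rw [SimpleGraph.mem_edgeSet]
    constructor
    · exact fun h => h.2
    · intro h
      exact ⟨(by revert a b; decide : ∀ a b : Fin 7, s(a,b) ∈ E7 → a ≠ b) a b h, h⟩

lemma edgeFinset_G7 [Fintype G7.edgeSet] : G7.edgeFinset = E7 := by
  apply Finset.coe_injective
  rw [SimpleGraph.coe_edgeFinset, edgeSet_G7]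

def I7 (v : Fin 7) : Finset (Sym2 (Fin 7)) := E7.filter (fun e => v ∈ e)

lemma incidenceFinset_G7 (v : Fin 7) [Fintype (G7.neighborSet v)] [inst : DecidableEq (Fin 7)] :
    G7.incidenceFinset v = I7 v := by
  rw [I7]
  apply Finset.coe_injective
  rw [show (G7.incidenceFinset v : Set (Sym2 (Fin 7))) = G7.incidenceSet v from Set.coe_toFinset _,
    Finset.coe_filter]
  ext e
  simp only [SimpleGraph.incidenceSet, Set.mem_setOf_eq, edgeSet_G7, Finset.mem_coe]

theorem kEdgeMagic_iff_7 (k : ℕ) : IsKEdgeMagic G7 k ↔ k ≡ 2 [MOD 7] := by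
  have hcardE : E7.card = 11 := by decide
  rw [IsKEdgeMagic]
  simp only [edgeFinset_G7, incidenceFinset_G7, hcardE, Fintype.card_fin]
  rw [Fintype.card_fin]
  constructor
  · rintro ⟨f, hbij, c, hc⟩
    rw [edgeSet_G7] at hbij
    -- sum of labels
    have hinj : ∀ x ∈ E7, ∀ y ∈ E7, f x = f y → x = y := fun x hx y hy h =>
      hbij.injOn (Finset.mem_coe.2 hx) (Finset.mem_coe.2 hy) h
    have himg : E7.image f = (Finset.range 11).image (fun i => k + i) := by
      apply Finset.coe_injective
      rw [Finset.coe_image, hbij.image_eq, Finset.coe_image, Finset.coe_range]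
    have hsumE : ∑ e ∈ E7, f e = 11 * k + 55 := by
      have h1 : ∑ x ∈ E7.image f, x = ∑ e ∈ E7, f e := Finset.sum_image hinj
      have h2 : ∑ x ∈ (Finset.range 11).image (fun i => k + i), x
          = ∑ i ∈ Finset.range 11, (k + i) :=
        Finset.sum_image (fun x _ y _ h => by omega)
      rw [← h1, himg, h2]
      simp [Finset.sum_range_succ]
      ring
    -- double counting
    have hdouble : ∑ v : Fin 7, ∑ e ∈ I7 v, f e
        = 2 * ∑ e ∈ E7, f e := by
      simp_rw [I7, Finset.sum_filter]
      rw [Finset.sum_comm, Finset.mul_sum]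
      refine Finset.sum_congr rfl fun e he => ?_
      rw [← Finset.sum_filter]
      have hcard2 : ∀ e ∈ E7, (Finset.univ.filter (fun v : Fin 7 => v ∈ e)).card = 2 := by
        decide
      rw [Finset.sum_const, hcard2 e he, smul_eq_mul]
    have h0 : ((2 * (11 * k + 55) : ℕ) : ZMod 7) = 0 := by
      calc ((2 * (11 * k + 55) : ℕ) : ZMod 7)
          = ((∑ v : Fin 7, ∑ e ∈ I7 v, f e : ℕ) : ZMod 7) := by
            rw [hdouble, hsumE]
        _ = ∑ v : Fin 7, ((∑ e ∈ I7 v, f e : ℕ) : ZMod 7) := by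
            push_cast; ring
        _ = ∑ _v : Fin 7, c := Finset.sum_congr rfl fun v _ => hc v
        _ = 7 • c := by simp
        _ = 0 := by
            rw [nsmul_eq_mul, show ((7 : ℕ) : ZMod 7) = 0 from rfl, zero_mul]
    have hdvd : (7 : ℕ) ∣ 2 * (11 * k + 55) :=
      (ZMod.natCast_eq_zero_iff _ _).1 h0
    show k % 7 = 2 % 7
    omega
  · intro hk
    have hk2 : ((k : ℕ) : ZMod 7) = 2 := by
      have := (ZMod.natCast_eq_natCast_iff k 2 7).2 hk
      simpa using this
    refine ⟨fun e => k + g7 e, ?_, 0, ?_⟩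
    · rw [edgeSet_G7]
      have hg : Set.BijOn g7 ↑E7 (Set.Iio 11) := by
        refine ⟨?_, ?_, ?_⟩
        · intro e he
          exact (by decide : ∀ e ∈ E7, g7 e < 11) e (Finset.mem_coe.1 he)
        · intro x hx y hy h
          exact (by decide : ∀ e ∈ E7, ∀ e' ∈ E7, g7 e = g7 e' → e = e') x
            (Finset.mem_coe.1 hx) y (Finset.mem_coe.1 hy) h
        · intro b hb
          obtain ⟨e, he, hge⟩ := (by decide : ∀ b < 11, ∃ e ∈ E7, g7 e = b) b hb
          exact ⟨e, Finset.mem_coe.2 he, hge⟩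
      exact ((add_right_injective k).injOn.bijOn_image).comp hg
    · intro v
      fin_cases v <;>
      · rw [Finset.sum_add_distrib, Finset.sum_const, smul_eq_mul]
        push_cast
        rw [hk2]
        decide
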